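/- arXiv:1202.5848 — 2 statements merged into one kernel-verified Lean document; each statement's English description precedes it below -/
import Mathlib

section
/- The number of tuples (k_1, ..., k_{n-1}) of non-negative integers satisfying k_1 + k_2 + ... + k_i ≤ i for all i = 1, ..., n-1 equals the Catalan number C_n. -/
open Finset

/-- Ballot-like counts: `gcount m c` will count tuples `k : Fin m → ℕ` with
all partial sums `k 0 + ⋯ + k i ≤ i + c`. -/
def gcount : ℕ → ℕ → ℕ
  | 0, _ => 1
  | (m+1), c => ∑ t ∈ Finset.range (c+1), gcount m (c+1-t)

lemma cons_inj (m t : ℕ) :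
    Function.Injective (@Fin.cons m (fun _ => ℕ) t) := by
  intro p q h
  funext j
  simpa using congrFun h j.succ

/-- The finset of admissible tuples with slack `c`. -/
def FS : (m : ℕ) → ℕ → Finset (Fin m → ℕ)
  | 0, _ => {Fin.elim0}
  | (m+1), c => (Finset.range (c+1)).biUnion
      (fun t => (FS m (c+1-t)).image (Fin.cons t))

lemma FS_card (m c : ℕ) : (FS m c).card = gcount m c := by
  induction m generalizing c with
  | zero => simp [FS, gcount]
  | succ m ih =>
    rw [FS, gcount, Finset.card_biUnion]
    · exact Finset.sum_congr rfl fun t _ => by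
        rw [Finset.card_image_of_injective _ (cons_inj m t), ih]
    · intro a _ b _ hab
      rw [Function.onFun, Finset.disjoint_left]
      intro k hk hk'
      obtain ⟨p, _, rfl⟩ := Finset.mem_image.mp hk
      obtain ⟨q, _, hq⟩ := Finset.mem_image.mp hk'
      exact hab (by simpa using (congrFun hq 0).symm)

lemma sum_le_zero' (m : ℕ) (k : Fin (m+1) → ℕ) :
    ∑ j ∈ Finset.univ.filter (fun j => j ≤ (0 : Fin (m+1))), k j = k 0 := by
  rw [Finset.sum_filter, Fin.sum_univ_succ]
  simp [Fin.le_def]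

lemma sum_le_succ' (m : ℕ) (k : Fin (m+1) → ℕ) (i : Fin m) :
    ∑ j ∈ Finset.univ.filter (fun j => j ≤ i.succ), k j
      = k 0 + ∑ j ∈ Finset.univ.filter (fun j => j ≤ i), k j.succ := by
  rw [Finset.sum_filter, Fin.sum_univ_succ, Finset.sum_filter]
  simp [Fin.succ_le_succ_iff, Fin.zero_le]

lemma mem_FS (m c : ℕ) (k : Fin m → ℕ) :
    k ∈ FS m c ↔
      ∀ i : Fin m, ∑ j ∈ Finset.univ.filter (fun j => j ≤ i), k j ≤ (i : ℕ) + c := by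
  induction m generalizing c with
  | zero =>
    simp only [FS, Finset.mem_singleton]
    constructor
    · intro _ i; exact i.elim0
    · intro _; exact funext fun i => i.elim0
  | succ m ih =>
    rw [FS, Finset.mem_biUnion]
    constructor
    · rintro ⟨t, ht, hk⟩
      rw [Finset.mem_image] at hk
      obtain ⟨p, hp, rfl⟩ := hk
      rw [Finset.mem_range] at ht
      rw [ih] at hp
      intro i
      refine Fin.cases ?_ ?_ i
      · rw [sum_le_zero']
        simpa using Nat.lt_succ_iff.mp ht
      · intro i'
        rw [sum_le_succ']
        simp only [Fin.cons_zero, Fin.cons_succ, Fin.val_succ]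
        have := hp i'
        have ht' : t ≤ c := Nat.lt_succ_iff.mp ht
        omega
    · intro hk
      refine ⟨k 0, ?_, ?_⟩
      · rw [Finset.mem_range, Nat.lt_succ_iff]
        have h0 := hk 0
        rw [sum_le_zero'] at h0
        simpa using h0
      · rw [Finset.mem_image]
        refine ⟨Fin.tail k, ?_, Fin.cons_self_tail k⟩
        rw [ih]
        intro i
        have h0 := hk 0
        rw [sum_le_zero'] at h0
        simp only [Fin.val_zero, Nat.zero_add] at h0
        have := hk i.succ
        rw [sum_le_succ'] at this
        simp only [Fin.tail, Fin.val_succ] at *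
        omega

lemma gcount_succ_succ (m c : ℕ) :
    gcount (m+1) (c+1) = gcount (m+1) c + gcount m (c+2) := by
  show (∑ t ∈ Finset.range (c+2), gcount m (c+2-t)) = _
  rw [Finset.sum_range_succ' (fun t => gcount m (c+2-t)) (c+1)]
  congr 1
  exact Finset.sum_congr rfl fun t ht => by congr 1; omega

lemma gcount_mul (m c : ℕ) :
    (m + c + 1) * gcount m c = (c + 1) * Nat.choose (2*m + c) m := by
  induction m generalizing c with
  | zero => simp [gcount]
  | succ m ih =>
    induction c with
    | zero =>
      have h1 : gcount (m+1) 0 = gcount m 1 := by simp [gcount]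
      have h2 := ih 1
      have h3 := Nat.add_one_mul_choose_eq (2*m+1) m
      have key : (m + 1) * ((m + 0 + 1 + 1) * gcount (m+1) 0)
          = (m + 1) * ((0 + 1) * Nat.choose (2*(m+1) + 0) (m+1)) := by
        rw [h1]
        have hN : 2*(m+1) + 0 = 2*m+1+1 := by ring
        rw [hN]
        zify at h2 h3 ⊢
        linear_combination ((m:ℤ)+1)*h2 + h3
      exact Nat.eq_of_mul_eq_mul_left (Nat.succ_pos m) key
    | succ c ihc =>
      have hrec := gcount_succ_succ m c
      have h1 := ih (c+2)
      have h4 : Nat.choose (2*(m+1)+(c+1)) (m+1)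
          = Nat.choose (2*m+c+2) (m+1) + Nat.choose (2*m+c+2) m := by
        have hN : 2*(m+1)+(c+1) = (2*m+c+2)+1 := by ring
        rw [hN, Nat.choose_succ_succ' (2*m+c+2) m]
        exact Nat.add_comm _ _
      have h5 : Nat.choose (2*m+c+2) (m+1) * (m+1)
          = Nat.choose (2*m+c+2) m * (m+c+2) := by
        have h := Nat.choose_succ_right_eq (2*m+c+2) m
        have hsub : 2*m+c+2 - m = m+c+2 := by omega
        rw [hsub] at h
        exact h
      have h2 : 2*(m+1)+c = 2*m+c+2 := by ring
      rw [h2] at ihc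
      have hm : 2*m+(c+2) = 2*m+c+2 := by ring
      rw [hm] at h1
      have key : (m + c + 2) * ((m + (c+1) + 1 + 1) * gcount (m+1) (c+1))
          = (m + c + 2) * ((c + 1 + 1) * Nat.choose (2*(m+1) + (c+1)) (m+1)) := by
        rw [hrec, h4]
        zify at ihc h1 h5 ⊢
        linear_combination ((m:ℤ)+c+3)*ihc + ((m:ℤ)+c+2)*h1 - h5
      have hco : m+1+(c+1)+1 = m+(c+1)+1+1 := by omega
      rw [hco]
      exact Nat.eq_of_mul_eq_mul_left (by omega) key

lemma gcount_one (m : ℕ) : gcount m 1 = catalan (m+1) := by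
  have h2 : (m + 1 + 1) * gcount m 1 = 2 * Nat.choose (2*m + 1) m := gcount_mul m 1
  have h3 := Nat.add_one_mul_choose_eq (2*m+1) m
  have hcb : (m + 2) * catalan (m+1) = Nat.choose (2*m+2) (m+1) := by
    have := succ_mul_catalan_eq_centralBinom (m+1)
    rw [Nat.centralBinom] at this
    have hN : 2*(m+1) = 2*m+2 := by ring
    rw [hN] at this
    exact this
  have key : (m + 1) * ((m + 2) * gcount m 1) = (m + 1) * ((m + 2) * catalan (m+1)) := by
    rw [hcb]
    zify at h2 h3 ⊢
    linear_combination ((m:ℤ)+1)*h2 + h3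
  have := Nat.eq_of_mul_eq_mul_left (Nat.succ_pos m) key
  exact Nat.eq_of_mul_eq_mul_left (by omega) this

/-- The number of tuples `(k₁, …, k_{n-1})` of non-negative integers satisfying
`k₁ + ⋯ + k_i ≤ i` for all `i = 1, …, n-1` equals the Catalan number `Cₙ`. -/
theorem stmt_0 (n : ℕ) :
    Set.ncard {k : Fin (n - 1) → ℕ |
      ∀ i : Fin (n - 1), ∑ j ∈ Finset.univ.filter (fun j => j ≤ i), k j ≤ (i : ℕ) + 1}
      = catalan n := by
  have hset : {k : Fin (n-1) → ℕ |
      ∀ i : Fin (n-1), ∑ j ∈ Finset.univ.filter (fun j => j ≤ i), k j ≤ (i : ℕ) + 1}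
      = ↑(FS (n-1) 1) := by
    ext k
    simp [mem_FS]
  rw [hset, Set.ncard_coe_finset, FS_card]
  cases n with
  | zero => simp [gcount, catalan_zero]
  | succ m => exact gcount_one m
end

section
/- Sylvester's identity for determinants: for any two s×s matrices M and N over a commutative ring and any k ≤ s, det(M)·det(N) = Σ_{1 ≤ r_1 < ... < r_k ≤ s} det(M')·det(N'), where M' and N' are obtained from M and N by interchanging the first k columns of N with the columns r_1, ..., r_k of M (preserving the order of columns). -/
open scoped Classical

namespace Sylv

open Matrix

variable {R : Type*} [CommRing R] {s k : ℕ}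

noncomputable def Mmat (hk : k ≤ s) (M N : Matrix (Fin s) (Fin s) R) (r : Fin k → Fin s) :
    Matrix (Fin s) (Fin s) R :=
  Matrix.of fun p q => if h : q ∈ Set.range r then N p (Fin.castLE hk h.choose) else M p q

noncomputable def Nmat (hk : k ≤ s) (M N : Matrix (Fin s) (Fin s) R) (r : Fin k → Fin s) :
    Matrix (Fin s) (Fin s) R :=
  Matrix.of fun p q => if h : (q : ℕ) < k then M p (r ⟨q, h⟩) else N p q

noncomputable def RHS (hk : k ≤ s) (M N : Matrix (Fin s) (Fin s) R) : R :=
  ∑ r ∈ Finset.univ.filter (fun r : Fin k → Fin s => StrictMono r),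
    (Mmat hk M N r).det * (Nmat hk M N r).det

lemma choose_eq {r : Fin k → Fin s} (hr : Function.Injective r) {q : Fin s}
    (h : q ∈ Set.range r) {i : Fin k} (hi : r i = q) : h.choose = i :=
  hr (h.choose_spec.trans hi.symm)

section maps

variable {S : Type*} [CommRing S] (f : R →+* S)

lemma map_Mmat (hk : k ≤ s) (M N : Matrix (Fin s) (Fin s) R) (r : Fin k → Fin s) :
    (Mmat hk M N r).map f = Mmat hk (M.map f) (N.map f) r := by
  ext p q
  simp only [Mmat, Matrix.map_apply, Matrix.of_apply, apply_dite f]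

lemma map_Nmat (hk : k ≤ s) (M N : Matrix (Fin s) (Fin s) R) (r : Fin k → Fin s) :
    (Nmat hk M N r).map f = Nmat hk (M.map f) (N.map f) r := by
  ext p q
  simp only [Nmat, Matrix.map_apply, Matrix.of_apply, apply_dite f]

lemma map_RHS (hk : k ≤ s) (M N : Matrix (Fin s) (Fin s) R) :
    f (RHS hk M N) = RHS hk (M.map f) (N.map f) := by
  rw [RHS, map_sum]
  refine Finset.sum_congr rfl fun r _ => ?_
  rw [_root_.map_mul, RingHom.map_det, RingHom.map_det, RingHom.mapMatrix_apply,
      RingHom.mapMatrix_apply, map_Mmat, map_Nmat]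

end maps

section core

noncomputable def Amat (hk : k ≤ s) (r : Fin k → Fin s) (v : Fin s → Fin s → R) :
    Matrix (Fin s) (Fin s) R :=
  Matrix.of fun q p => if h : q ∈ Set.range r then v (Fin.castLE hk h.choose) p
    else (1 : Matrix (Fin s) (Fin s) R) p q

noncomputable def Bmat (hk : k ≤ s) (r : Fin k → Fin s) (v : Fin s → Fin s → R) :
    Matrix (Fin s) (Fin s) R :=
  Matrix.of fun q p => if h : (q : ℕ) < k then (1 : Matrix (Fin s) (Fin s) R) p (r ⟨q, h⟩)
    else v q p

lemma Mmat_one (hk : k ≤ s) (C : Matrix (Fin s) (Fin s) R) (r : Fin k → Fin s) :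
    Mmat hk 1 C r = (Amat hk r (fun j p => C p j))ᵀ := rfl

lemma Nmat_one (hk : k ≤ s) (C : Matrix (Fin s) (Fin s) R) (r : Fin k → Fin s) :
    Nmat hk 1 C r = (Bmat hk r (fun j p => C p j))ᵀ := rfl

section update

variable [DecidableEq (Fin s)]

lemma Amat_update_lt (hk : k ≤ s) {r : Fin k → Fin s} (hr : Function.Injective r)
    (v : Fin s → Fin s → R) (i : Fin k) (z : Fin s → R) :
    Amat hk r (Function.update v (Fin.castLE hk i) z) = (Amat hk r v).updateRow (r i) z := by
  ext q p
  by_cases hq : q = r i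
  · subst hq
    have h : r i ∈ Set.range r := ⟨i, rfl⟩
    rw [Matrix.updateRow_self]
    simp only [Amat, Matrix.of_apply, dif_pos h, choose_eq hr h rfl, Function.update_self]
  · rw [Matrix.updateRow_ne hq]
    simp only [Amat, Matrix.of_apply]
    by_cases h : q ∈ Set.range r
    · rw [dif_pos h, dif_pos h, Function.update_of_ne]
      intro hc
      exact hq (h.choose_spec ▸ congrArg r (Fin.castLE_injective hk hc) ▸ rfl)
    · rw [dif_neg h, dif_neg h]

lemma Bmat_update_lt (hk : k ≤ s) (r : Fin k → Fin s)
    (v : Fin s → Fin s → R) (i : Fin k) (z : Fin s → R) :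
    Bmat hk r (Function.update v (Fin.castLE hk i) z) = Bmat hk r v := by
  ext q p
  simp only [Bmat, Matrix.of_apply]
  by_cases h : (q : ℕ) < k
  · rw [dif_pos h, dif_pos h]
  · rw [dif_neg h, dif_neg h, Function.update_of_ne]
    intro hc
    exact h (hc ▸ (by simpa using i.2))

lemma Amat_update_ge (hk : k ≤ s) (r : Fin k → Fin s)
    (v : Fin s → Fin s → R) {i : Fin s} (hi : ¬ (i : ℕ) < k) (z : Fin s → R) :
    Amat hk r (Function.update v i z) = Amat hk r v := by
  ext q p
  simp only [Amat, Matrix.of_apply]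
  by_cases h : q ∈ Set.range r
  · rw [dif_pos h, dif_pos h, Function.update_of_ne]
    intro hc
    exact hi (hc ▸ (by simpa using (h.choose).2))
  · rw [dif_neg h, dif_neg h]

lemma Bmat_update_ge (hk : k ≤ s) (r : Fin k → Fin s)
    (v : Fin s → Fin s → R) {i : Fin s} (hi : ¬ (i : ℕ) < k) (z : Fin s → R) :
    Bmat hk r (Function.update v i z) = (Bmat hk r v).updateRow i z := by
  ext q p
  by_cases hq : q = i
  · subst hq
    rw [Matrix.updateRow_self]
    simp only [Bmat, Matrix.of_apply, dif_neg hi, Function.update_self]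
  · rw [Matrix.updateRow_ne hq]
    simp only [Bmat, Matrix.of_apply]
    by_cases h : (q : ℕ) < k
    · rw [dif_pos h, dif_pos h]
    · rw [dif_neg h, dif_neg h, Function.update_of_ne hq]

end update

noncomputable def termMap (hk : k ≤ s) {r : Fin k → Fin s} (hr : Function.Injective r) :
    MultilinearMap R (fun _ : Fin s => (Fin s → R)) R where
  toFun v := (Amat hk r v).det * (Bmat hk r v).det
  map_update_add' {dec} v i x y := by
    have hdec : dec = instDecidableEqFin s := Subsingleton.elim _ _
    subst hdec
    by_cases hi : (i : ℕ) < k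
    · have hcast : Fin.castLE hk ⟨(i : ℕ), hi⟩ = i := rfl
      rw [← hcast, Amat_update_lt hk hr, Amat_update_lt hk hr, Amat_update_lt hk hr,
        Bmat_update_lt, Bmat_update_lt, Bmat_update_lt, Matrix.det_updateRow_add, add_mul]
    · rw [Amat_update_ge hk r _ hi, Amat_update_ge hk r _ hi, Amat_update_ge hk r _ hi,
        Bmat_update_ge hk r _ hi, Bmat_update_ge hk r _ hi, Bmat_update_ge hk r _ hi,
        Matrix.det_updateRow_add, mul_add]
  map_update_smul' {dec} v i c x := by
    have hdec : dec = instDecidableEqFin s := Subsingleton.elim _ _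
    subst hdec
    by_cases hi : (i : ℕ) < k
    · have hcast : Fin.castLE hk ⟨(i : ℕ), hi⟩ = i := rfl
      rw [← hcast, Amat_update_lt hk hr, Amat_update_lt hk hr,
        Bmat_update_lt, Bmat_update_lt, Matrix.det_updateRow_smul, smul_eq_mul, mul_assoc]
    · rw [Amat_update_ge hk r _ hi, Amat_update_ge hk r _ hi,
        Bmat_update_ge hk r _ hi, Bmat_update_ge hk r _ hi, Matrix.det_updateRow_smul,
        smul_eq_mul, mul_left_comm]

noncomputable def termMap' (hk : k ≤ s) (r : Fin k → Fin s) :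
    MultilinearMap R (fun _ : Fin s => (Fin s → R)) R :=
  if h : Function.Injective r then termMap hk h else 0

lemma termMap'_apply (hk : k ≤ s) {r : Fin k → Fin s} (hr : Function.Injective r)
    (v : Fin s → Fin s → R) :
    termMap' hk r v = (Amat hk r v).det * (Bmat hk r v).det := by
  rw [termMap', dif_pos hr]; rfl

end core

section patterns

variable (hk : k ≤ s)

/-- row pattern of `Amat` on basis vectors -/
noncomputable def af (hk : k ≤ s) (g : Fin s → Fin s) (r : Fin k → Fin s) : Fin s → Fin s :=
  fun q => if h : q ∈ Set.range r then g (Fin.castLE hk h.choose) else q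

/-- row pattern of `Bmat` on basis vectors -/
noncomputable def bf (hk : k ≤ s) (g : Fin s → Fin s) (r : Fin k → Fin s) : Fin s → Fin s :=
  fun q => if h : (q : ℕ) < k then r ⟨q, h⟩ else g q

/-- tuple of basis (row) vectors indexed by `g` -/
def vg (g : Fin s → Fin s) : Fin s → Fin s → R :=
  fun i p => if g i = p then 1 else 0

lemma Amat_vg (g : Fin s → Fin s) (r : Fin k → Fin s) :
    Amat hk r (vg (R := R) g) = Matrix.of fun q p => if af hk g r q = p then (1 : R) else 0 := by
  ext q p
  by_cases h : q ∈ Set.range r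
  · have h' : ∃ y, r y = q := h
    simp [Amat, Matrix.of_apply, af, vg, h']
  · simp only [Amat, Matrix.of_apply, af, vg, dif_neg h, Matrix.one_apply]
    simp [eq_comm]

lemma Bmat_vg (g : Fin s → Fin s) (r : Fin k → Fin s) :
    Bmat hk r (vg (R := R) g) = Matrix.of fun q p => if bf hk g r q = p then (1 : R) else 0 := by
  ext q p
  by_cases h : (q : ℕ) < k
  · simp only [Bmat, Matrix.of_apply, bf, vg, dif_pos h, Matrix.one_apply]
    simp [eq_comm]
  · simp [Bmat, Matrix.of_apply, bf, vg, h]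

lemma det_pattern_zero {f : Fin s → Fin s} (hf : ¬ Function.Injective f) :
    (Matrix.of fun q p => if f q = p then (1 : R) else 0).det = 0 := by
  rw [Function.not_injective_iff] at hf
  obtain ⟨a, b, hab, hne⟩ := hf
  refine Matrix.det_zero_of_row_eq hne (funext fun p => ?_)
  simp [hab]

lemma det_pattern_perm (σ : Equiv.Perm (Fin s)) :
    (Matrix.of fun q p => if σ q = p then (1 : R) else 0).det = (Equiv.Perm.sign σ : ℤ) := by
  have h : (Matrix.of fun q p => if σ q = p then (1 : R) else 0) = σ.permMatrix R := by
    ext q p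
    simp [Equiv.Perm.permMatrix, PEquiv.toMatrix_apply, Equiv.toPEquiv_apply, Option.mem_def,
      eq_comm]
  rw [h, Matrix.det_permutation]

lemma af_apply_mem {r : Fin k → Fin s} (hr : Function.Injective r) (g : Fin s → Fin s)
    (i : Fin k) : af hk g r (r i) = g (Fin.castLE hk i) := by
  have h : r i ∈ Set.range r := ⟨i, rfl⟩
  rw [af, dif_pos h, choose_eq hr h rfl]

lemma af_apply_not_mem {r : Fin k → Fin s} (g : Fin s → Fin s) {q : Fin s}
    (h : q ∉ Set.range r) : af hk g r q = q := dif_neg h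

lemma bf_apply_lt (g : Fin s → Fin s) (r : Fin k → Fin s) (i : Fin k) :
    bf hk g r (Fin.castLE hk i) = r i := by
  have h : ((Fin.castLE hk i : Fin s) : ℕ) < k := by simpa using i.2
  simp only [bf, dif_pos h]
  exact congrArg r (Fin.ext rfl)

lemma bf_apply_ge (g : Fin s → Fin s) (r : Fin k → Fin s) {q : Fin s} (h : ¬ (q : ℕ) < k) :
    bf hk g r q = g q := dif_neg h

/-- from injectivity of both patterns, `g` is injective -/
lemma g_inj_of {g : Fin s → Fin s} {r : Fin k → Fin s} (hr : Function.Injective r)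
    (ha : Function.Injective (af hk g r)) (hb : Function.Injective (bf hk g r)) :
    Function.Injective g := by
  have main : ∀ a b : Fin s, (a : ℕ) < k → ¬ (b : ℕ) < k → g a = g b → False := by
    intro a b hak hbk hab
    by_cases hgb : g b ∈ Set.range r
    · obtain ⟨c, hc⟩ := hgb
      have h1 : bf hk g r (Fin.castLE hk c) = g b := by rw [bf_apply_lt, hc]
      have h2 : bf hk g r b = g b := bf_apply_ge hk g r hbk
      have := hb (h1.trans h2.symm)
      rw [← this] at hbk
      exact hbk (by simpa using c.2)
    · have h1 : af hk g r (g b) = g b := af_apply_not_mem hk g hgb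
      have h2 : af hk g r (r ⟨(a : ℕ), hak⟩) = g b := by
        rw [af_apply_mem hk hr]
        rw [show Fin.castLE hk ⟨(a : ℕ), hak⟩ = a from rfl, hab]
      exact hgb ⟨⟨(a : ℕ), hak⟩, ha (h2.trans h1.symm)⟩
  intro a b hab
  by_cases hak : (a : ℕ) < k <;> by_cases hbk : (b : ℕ) < k
  · have h1 : af hk g r (r ⟨(a : ℕ), hak⟩) = g a := af_apply_mem hk hr g _
    have h2 : af hk g r (r ⟨(b : ℕ), hbk⟩) = g b := af_apply_mem hk hr g _
    have := hr (ha (h1.trans (hab.trans h2.symm)))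
    have hv : ((⟨(a : ℕ), hak⟩ : Fin k) : ℕ) = ((⟨(b : ℕ), hbk⟩ : Fin k) : ℕ) :=
      congrArg Fin.val this
    exact Fin.ext hv
  · exact absurd hab (fun h => main a b hak hbk h)
  · exact absurd hab.symm (fun h => main b a hbk hak h)
  · have h1 : bf hk g r a = g a := bf_apply_ge hk g r hak
    have h2 : bf hk g r b = g b := bf_apply_ge hk g r hbk
    exact hb (h1.trans (hab.trans h2.symm))

end patterns

section key

lemma bf_apply_lt' (hk : k ≤ s) (g : Fin s → Fin s) (r : Fin k → Fin s) {x : Fin s}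
    (hx : (x : ℕ) < k) : bf hk g r x = r ⟨(x : ℕ), hx⟩ := by
  simp only [bf]
  exact dif_pos hx

lemma key (hk : k ≤ s) :
    (Matrix.detRowAlternating : AlternatingMap R (Fin s → R) R (Fin s)).toMultilinearMap =
      ∑ r ∈ Finset.univ.filter (fun r : Fin k → Fin s => StrictMono r), termMap' hk r := by
  apply Module.Basis.ext_multilinear (fun _ => Pi.basisFun R (Fin s))
  intro g
  have hbasis : (fun i => (Pi.basisFun R (Fin s)) (g i)) = vg (R := R) g := by
    funext i p
    simp [Pi.basisFun_apply, Pi.single_apply, vg, eq_comm]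
  rw [hbasis, MultilinearMap.sum_apply]
  by_cases hginj : Function.Injective g
  · -- injective case
    have hgbij := Finite.injective_iff_bijective.mp hginj
    set gE : Equiv.Perm (Fin s) := Equiv.ofBijective g hgbij with hgE
    have hL : (Matrix.detRowAlternating : AlternatingMap R (Fin s → R) R (Fin s)).toMultilinearMap
        (vg (R := R) g) = ((Equiv.Perm.sign gE : ℤ) : R) := det_pattern_perm gE
    rw [hL]
    set S : Finset (Fin s) := Finset.image (fun i : Fin k => g (Fin.castLE hk i)) Finset.univ
      with hS
    have hScard : S.card = k := by
      rw [hS, Finset.card_image_of_injective _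
        (fun a b hab => (Fin.castLE_injective hk) (hginj hab)),
        Finset.card_univ, Fintype.card_fin]
    set r₀ : Fin k → Fin s := ⇑(S.orderEmbOfFin hScard) with hr₀
    have hr₀mono : StrictMono r₀ := (S.orderEmbOfFin hScard).strictMono
    have hr₀mem : r₀ ∈ Finset.univ.filter (fun r : Fin k → Fin s => StrictMono r) := by
      simp only [Finset.mem_filter, Finset.mem_univ, true_and]
      exact hr₀mono
    have hrange : Set.range r₀ = ↑S := Finset.range_orderEmbOfFin S hScard
    have hmemS : ∀ x : Fin s, x ∈ Set.range r₀ ↔ ∃ t : Fin k, g (Fin.castLE hk t) = x := by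
      intro x
      rw [hrange]
      simp [hS]
    rw [Finset.sum_eq_single_of_mem r₀ hr₀mem ?other]
    case other =>
      intro r hrmem hrne
      have hrmono : StrictMono r := (Finset.mem_filter.mp hrmem).2
      by_cases hall : ∀ t : Fin k, g (Fin.castLE hk t) ∈ Set.range r
      · exfalso
        have himg : S ⊆ Finset.image r Finset.univ := by
          intro x hx
          rw [hS] at hx
          obtain ⟨t, _, rfl⟩ := Finset.mem_image.mp hx
          obtain ⟨y, hy⟩ := hall t
          exact Finset.mem_image.mpr ⟨y, Finset.mem_univ y, hy⟩
        have hcard2 : (Finset.image r Finset.univ).card = k := by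
          rw [Finset.card_image_of_injective _ hrmono.injective, Finset.card_univ,
            Fintype.card_fin]
        have heq : S = Finset.image r Finset.univ :=
          Finset.eq_of_subset_of_card_le himg (by rw [hcard2, hScard])
        have : r = r₀ := Finset.orderEmbOfFin_unique hScard
          (fun x => by rw [heq]; exact Finset.mem_image_of_mem r (Finset.mem_univ x)) hrmono
        exact hrne this
      · push_neg at hall
        obtain ⟨t, ht⟩ := hall
        rw [termMap'_apply hk hrmono.injective, Amat_vg]
        have hne : r t ≠ g (Fin.castLE hk t) := fun hc => ht ⟨t, hc⟩
        have h1 : af hk g r (r t) = g (Fin.castLE hk t) := af_apply_mem hk hrmono.injective g t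
        have h2 : af hk g r (g (Fin.castLE hk t)) = g (Fin.castLE hk t) :=
          af_apply_not_mem hk g ht
        have hain : ¬ Function.Injective (af hk g r) :=
          fun hinj => hne (hinj (h1.trans h2.symm))
        rw [det_pattern_zero hain, zero_mul]
    -- the main term
    rw [termMap'_apply hk hr₀mono.injective, Amat_vg hk, Bmat_vg hk]
    have hainj : Function.Injective (af hk g r₀) := by
      intro x y hxy
      by_cases hx : x ∈ Set.range r₀ <;> by_cases hy' : y ∈ Set.range r₀
      · obtain ⟨i, rfl⟩ := hx
        obtain ⟨j, rfl⟩ := hy'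
        rw [af_apply_mem hk hr₀mono.injective, af_apply_mem hk hr₀mono.injective] at hxy
        exact congrArg r₀ (Fin.castLE_injective hk (hginj hxy))
      · obtain ⟨i, rfl⟩ := hx
        rw [af_apply_mem hk hr₀mono.injective, af_apply_not_mem hk g hy'] at hxy
        exact absurd ((hmemS y).mpr ⟨i, hxy⟩) hy'
      · obtain ⟨j, rfl⟩ := hy'
        rw [af_apply_not_mem hk g hx, af_apply_mem hk hr₀mono.injective] at hxy
        exact absurd ((hmemS x).mpr ⟨j, hxy.symm⟩) hx
      · rw [af_apply_not_mem hk g hx, af_apply_not_mem hk g hy'] at hxy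
        exact hxy
    have hbinj : Function.Injective (bf hk g r₀) := by
      intro x y hxy
      by_cases hx : (x : ℕ) < k <;> by_cases hy' : (y : ℕ) < k
      · rw [bf_apply_lt' hk g r₀ hx, bf_apply_lt' hk g r₀ hy'] at hxy
        have := hr₀mono.injective hxy
        have hv : ((⟨(x : ℕ), hx⟩ : Fin k) : ℕ) = ((⟨(y : ℕ), hy'⟩ : Fin k) : ℕ) :=
          congrArg Fin.val this
        exact Fin.ext hv
      · rw [bf_apply_lt' hk g r₀ hx, bf_apply_ge hk g r₀ hy'] at hxy
        have : g y ∈ Set.range r₀ := ⟨⟨(x : ℕ), hx⟩, hxy⟩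
        obtain ⟨t, htx⟩ := (hmemS _).mp this
        have := hginj htx
        exact absurd (this ▸ (by simpa using t.2)) hy'
      · rw [bf_apply_ge hk g r₀ hx, bf_apply_lt' hk g r₀ hy'] at hxy
        have : g x ∈ Set.range r₀ := ⟨⟨(y : ℕ), hy'⟩, hxy.symm⟩
        obtain ⟨t, htx⟩ := (hmemS _).mp this
        have := hginj htx
        exact absurd (this ▸ (by simpa using t.2)) hx
      · rw [bf_apply_ge hk g r₀ hx, bf_apply_ge hk g r₀ hy'] at hxy
        exact hginj hxy
    have hcomp : ∀ x, af hk g r₀ (bf hk g r₀ x) = g x := by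
      intro x
      by_cases hx : (x : ℕ) < k
      · rw [bf_apply_lt' hk g r₀ hx, af_apply_mem hk hr₀mono.injective]
        rfl
      · rw [bf_apply_ge hk g r₀ hx]
        refine af_apply_not_mem hk g (fun hc => ?_)
        obtain ⟨t, htx⟩ := (hmemS _).mp hc
        have := hginj htx
        exact hx (this ▸ (by simpa using t.2))
    have habij := Finite.injective_iff_bijective.mp hainj
    have hbbij := Finite.injective_iff_bijective.mp hbinj
    set aE : Equiv.Perm (Fin s) := Equiv.ofBijective _ habij with haE
    set bE : Equiv.Perm (Fin s) := Equiv.ofBijective _ hbbij with hbE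
    have hA : (Matrix.of fun q p => if af hk g r₀ q = p then (1 : R) else 0).det
        = ((Equiv.Perm.sign aE : ℤ) : R) := det_pattern_perm aE
    have hB : (Matrix.of fun q p => if bf hk g r₀ q = p then (1 : R) else 0).det
        = ((Equiv.Perm.sign bE : ℤ) : R) := det_pattern_perm bE
    rw [hA, hB]
    have hgab : gE = aE * bE := by
      refine Equiv.ext fun x => ?_
      simp only [Equiv.Perm.mul_apply, haE, hbE, hgE, Equiv.ofBijective_apply]
      exact (hcomp x).symm
    have hsign : Equiv.Perm.sign gE = Equiv.Perm.sign aE * Equiv.Perm.sign bE := by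
      rw [hgab, _root_.map_mul]
    rw [hsign, Units.val_mul, Int.cast_mul]
  · -- non-injective case
    have hL0 : (Matrix.detRowAlternating : AlternatingMap R (Fin s → R) R (Fin s)).toMultilinearMap
        (vg (R := R) g) = 0 := det_pattern_zero hginj
    rw [hL0]
    refine (Finset.sum_eq_zero fun r hrmem => ?_).symm
    have hrmono : StrictMono r := (Finset.mem_filter.mp hrmem).2
    rw [termMap'_apply hk hrmono.injective, Amat_vg hk, Bmat_vg hk]
    by_cases hain : Function.Injective (af hk g r)
    · have hbin : ¬ Function.Injective (bf hk g r) :=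
        fun hb => hginj (g_inj_of hk hrmono.injective hain hb)
      rw [det_pattern_zero hbin, mul_zero]
    · rw [det_pattern_zero hain, zero_mul]

end key

section assemble

lemma laplace (hk : k ≤ s) (C : Matrix (Fin s) (Fin s) R) :
    C.det = RHS hk 1 C := by
  have happ := congrArg (fun F : MultilinearMap R (fun _ : Fin s => (Fin s → R)) R =>
      F (fun j p => C p j)) (key (R := R) hk)
  simp only [MultilinearMap.sum_apply] at happ
  have hL : (Matrix.detRowAlternating : AlternatingMap R (Fin s → R) R (Fin s)).toMultilinearMap
      (fun j p => C p j) = C.det := by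
    rw [show ((Matrix.detRowAlternating : AlternatingMap R (Fin s → R) R (Fin s)).toMultilinearMap
      (fun j p => C p j)) = Cᵀ.det from rfl, Matrix.det_transpose]
  rw [hL] at happ
  rw [happ, RHS]
  refine Finset.sum_congr rfl fun r hrmem => ?_
  have hrmono : StrictMono r := (Finset.mem_filter.mp hrmem).2
  rw [termMap'_apply hk hrmono.injective, Mmat_one hk C r, Nmat_one hk C r,
    Matrix.det_transpose, Matrix.det_transpose]

lemma key_isUnit (hk : k ≤ s) (M N : Matrix (Fin s) (Fin s) R) (hM : IsUnit M.det) :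
    M.det * N.det = RHS hk M N := by
  set C : Matrix (Fin s) (Fin s) R := M⁻¹ * N with hC
  have hMC : M * C = N := Matrix.mul_nonsing_inv_cancel_left M N hM
  have h1 : ∀ r : Fin k → Fin s, Mmat hk M N r = M * Mmat hk 1 C r := by
    intro r
    ext p q
    by_cases h : q ∈ Set.range r
    · have h' : ∃ y, r y = q := h
      simp only [Mmat, Matrix.of_apply, Matrix.mul_apply, h, h', dif_pos]
      rw [← Matrix.mul_apply, hMC]
    · simp only [Mmat, Matrix.of_apply, Matrix.mul_apply, h, dif_neg, not_false_iff]
      rw [← Matrix.mul_apply, Matrix.mul_one]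
  have h2 : ∀ r : Fin k → Fin s, Nmat hk M N r = M * Nmat hk 1 C r := by
    intro r
    ext p q
    by_cases h : (q : ℕ) < k
    · simp only [Nmat, Matrix.of_apply, Matrix.mul_apply]
      simp only [h, dif_pos]
      rw [← Matrix.mul_apply, Matrix.mul_one]
    · simp only [Nmat, Matrix.of_apply, Matrix.mul_apply, h, dif_neg, not_false_iff]
      rw [← Matrix.mul_apply, hMC]
  have hdetN : N.det = M.det * C.det := by rw [← hMC, Matrix.det_mul]
  rw [RHS]
  calc M.det * N.det = M.det * (M.det * C.det) := by rw [hdetN]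
    _ = (M.det * M.det) * C.det := by ring
    _ = (M.det * M.det) * RHS hk 1 C := by rw [← laplace hk C]
    _ = ∑ r ∈ Finset.univ.filter (fun r : Fin k → Fin s => StrictMono r),
        (Mmat hk M N r).det * (Nmat hk M N r).det := by
      rw [RHS, Finset.mul_sum]
      refine Finset.sum_congr rfl fun r _ => ?_
      rw [h1 r, h2 r, Matrix.det_mul, Matrix.det_mul]
      ring

end assemble

section transfer

lemma stmt_general (R : Type*) [CommRing R] (s k : ℕ) (hk : k ≤ s)
    (M N : Matrix (Fin s) (Fin s) R) : M.det * N.det = RHS hk M N := by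
  set X : Matrix (Fin s) (Fin s) (MvPolynomial ((Fin s × Fin s) ⊕ (Fin s × Fin s)) ℤ) :=
    Matrix.of fun p q => MvPolynomial.X (Sum.inl (p, q)) with hX
  set Y : Matrix (Fin s) (Fin s) (MvPolynomial ((Fin s × Fin s) ⊕ (Fin s × Fin s)) ℤ) :=
    Matrix.of fun p q => MvPolynomial.X (Sum.inr (p, q)) with hY
  have hdet0 : X.det ≠ 0 := by
    intro h0
    set ψ : MvPolynomial ((Fin s × Fin s) ⊕ (Fin s × Fin s)) ℤ →+* ℤ :=
      MvPolynomial.eval₂Hom (Int.castRingHom ℤ)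
      (Sum.elim (fun p : Fin s × Fin s => if p.1 = p.2 then (1 : ℤ) else 0) fun _ => 0) with hψ
    have h1 := congrArg ψ h0
    rw [RingHom.map_det, map_zero] at h1
    have hX1 : ψ.mapMatrix X = (1 : Matrix (Fin s) (Fin s) ℤ) := by
      ext p q
      simp [hψ, hX, Matrix.map_apply, MvPolynomial.eval₂Hom_X', Matrix.one_apply]
    rw [hX1, Matrix.det_one] at h1
    exact one_ne_zero h1
  have hgen : X.det * Y.det = RHS hk X Y := by
    have hinj : Function.Injective (algebraMap
        (MvPolynomial ((Fin s × Fin s) ⊕ (Fin s × Fin s)) ℤ)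
        (FractionRing (MvPolynomial ((Fin s × Fin s) ⊕ (Fin s × Fin s)) ℤ))) :=
      IsFractionRing.injective _ _
    apply hinj
    rw [_root_.map_mul, RingHom.map_det, RingHom.map_det, RingHom.mapMatrix_apply,
      RingHom.mapMatrix_apply, map_RHS]
    have hdetmap : (X.map (algebraMap _
        (FractionRing (MvPolynomial ((Fin s × Fin s) ⊕ (Fin s × Fin s)) ℤ)))).det
        = algebraMap _ _ X.det := by
      rw [RingHom.map_det, RingHom.mapMatrix_apply]
    have hunit : IsUnit ((X.map (algebraMap _
        (FractionRing (MvPolynomial ((Fin s × Fin s) ⊕ (Fin s × Fin s)) ℤ)))).det) := by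
      rw [isUnit_iff_ne_zero, hdetmap]
      intro hc
      exact hdet0 (hinj (by rw [hc, map_zero]))
    exact key_isUnit hk _ _ hunit
  set φ : MvPolynomial ((Fin s × Fin s) ⊕ (Fin s × Fin s)) ℤ →+* R :=
    MvPolynomial.eval₂Hom (Int.castRingHom R)
    (Sum.elim (fun p : Fin s × Fin s => M p.1 p.2) fun p : Fin s × Fin s => N p.1 p.2) with hφ
  have hXM : X.map φ = M := by
    ext p q
    simp [hφ, hX, Matrix.map_apply, MvPolynomial.eval₂Hom_X']
  have hYN : Y.map φ = N := by
    ext p q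
    simp [hφ, hY, Matrix.map_apply, MvPolynomial.eval₂Hom_X']
  have hfin := congrArg φ hgen
  rw [_root_.map_mul, RingHom.map_det, RingHom.map_det, RingHom.mapMatrix_apply,
    RingHom.mapMatrix_apply, map_RHS, hXM, hYN] at hfin
  exact hfin

end transfer

end Sylv

/-- Sylvester's identity: for `s×s` matrices `M, N` over a commutative ring and `k ≤ s`,
`det M · det N = Σ_{r₁<⋯<r_k} det M' · det N'`, where `M'`, `N'` are obtained by
interchanging the first `k` columns of `N` with the columns `r₁,…,r_k` of `M`
(preserving the order of columns). -/
theorem stmt_1 (R : Type*) [CommRing R] (s k : ℕ) (hk : k ≤ s)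
    (M N : Matrix (Fin s) (Fin s) R) :
    M.det * N.det =
      ∑ r ∈ Finset.univ.filter (fun r : Fin k → Fin s => StrictMono r),
        (Matrix.of fun (p q : Fin s) =>
            if h : q ∈ Set.range r then N p (Fin.castLE hk h.choose) else M p q).det *
        (Matrix.of fun (p q : Fin s) =>
            if h : (q : ℕ) < k then M p (r ⟨q, h⟩) else N p q).det := by
  have h := Sylv.stmt_general R s k hk M N
  rw [Sylv.RHS] at h
  simp only [Sylv.Mmat, Sylv.Nmat] at h
  exact h
end
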